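/- Let ζ ∈ ℝ, b ≠ 0, φ, f₀, f₁ ∈ ℝ, let K be a finite set, A : K → ℝ, and let ω_k ≠ 0 for each k ∈ K. The unique twice differentiable function f : ℝ → ℝ satisfying f''(τ) = f'(τ) − (ζ/b²) Σ_{k∈K} A_k sin(ω_k τ + φ) for all τ, f(0) = f₀ and f'(0) = f₁ is f(τ) = f₀ + f₁ (e^τ − 1) − (ζ/b²) Σ_{k∈K} (A_k/(1 + ω_k²)) [ (1/ω_k) cos(ω_k τ + φ) − sin(ω_k τ + φ) + e^τ (ω_k cos φ + sin φ) − (1 + ω_k²) cos φ / ω_k ]. -/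

import Mathlib

private lemma lin_hasDerivAt (w φ τ : ℝ) : HasDerivAt (fun τ : ℝ => w * τ + φ) w τ := by
  simpa using ((hasDerivAt_id τ).const_mul w).add_const φ

private lemma sol_deriv1 {w : ℝ} (hw : w ≠ 0) (a φ τ : ℝ) :
    HasDerivAt (fun τ => a * ((1 / w) * Real.cos (w * τ + φ) - Real.sin (w * τ + φ)
        + Real.exp τ * (w * Real.cos φ + Real.sin φ) - (1 + w ^ 2) * Real.cos φ / w))
      (a * (-Real.sin (w * τ + φ) - w * Real.cos (w * τ + φ)
        + Real.exp τ * (w * Real.cos φ + Real.sin φ))) τ := by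
  have hcos := (Real.hasDerivAt_cos (w * τ + φ)).comp τ (lin_hasDerivAt w φ τ)
  have hsin := (Real.hasDerivAt_sin (w * τ + φ)).comp τ (lin_hasDerivAt w φ τ)
  have hexp := (Real.hasDerivAt_exp τ).mul_const (w * Real.cos φ + Real.sin φ)
  have h := ((((hcos.const_mul (1 / w)).sub hsin).add hexp).sub_const
      ((1 + w ^ 2) * Real.cos φ / w)).const_mul a
  refine h.congr_deriv ?_
  field_simp

private lemma sol_deriv2 (w a φ τ : ℝ) :
    HasDerivAt (fun τ => a * (-Real.sin (w * τ + φ) - w * Real.cos (w * τ + φ)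
        + Real.exp τ * (w * Real.cos φ + Real.sin φ)))
      (a * (-Real.sin (w * τ + φ) - w * Real.cos (w * τ + φ)
        + Real.exp τ * (w * Real.cos φ + Real.sin φ))
        + a * (1 + w ^ 2) * Real.sin (w * τ + φ)) τ := by
  have hcos := (Real.hasDerivAt_cos (w * τ + φ)).comp τ (lin_hasDerivAt w φ τ)
  have hsin := (Real.hasDerivAt_sin (w * τ + φ)).comp τ (lin_hasDerivAt w φ τ)
  have hexp := (Real.hasDerivAt_exp τ).mul_const (w * Real.cos φ + Real.sin φ)
  have h := ((hsin.neg.sub (hcos.const_mul w)).add hexp).const_mul a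
  refine h.congr_deriv ?_
  ring

/-- Equation (4.4): the unique twice differentiable solution of the linearized equation
`f'' = f' - (ζ/b²) ∑_k A_k sin(ω_k τ + φ)` with `f(0) = f₀` and `f'(0) = f₁`. -/
theorem fast_component_linearized_ode_unique_solution
    (ζ b φ f₀ f₁ : ℝ) (hb : b ≠ 0)
    (K : Finset ℤ) (A ω : ℤ → ℝ) (hω : ∀ k ∈ K, ω k ≠ 0)
    (f : ℝ → ℝ) :
    ((∀ τ, DifferentiableAt ℝ f τ) ∧ (∀ τ, DifferentiableAt ℝ (deriv f) τ) ∧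
      (∀ τ, deriv (deriv f) τ
        = deriv f τ - (ζ / b ^ 2) * ∑ k ∈ K, A k * Real.sin (ω k * τ + φ)) ∧
      f 0 = f₀ ∧ deriv f 0 = f₁)
    ↔ (∀ τ, f τ = f₀ + f₁ * (Real.exp τ - 1) -
        (ζ / b ^ 2) * ∑ k ∈ K, (A k / (1 + (ω k) ^ 2)) *
          ((1 / ω k) * Real.cos (ω k * τ + φ) - Real.sin (ω k * τ + φ)
            + Real.exp τ * (ω k * Real.cos φ + Real.sin φ)
            - (1 + (ω k) ^ 2) * Real.cos φ / ω k)) := by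
  set c : ℝ := ζ / b ^ 2 with hc
  set g : ℝ → ℝ := fun τ => f₀ + f₁ * (Real.exp τ - 1) -
      c * ∑ k ∈ K, (A k / (1 + (ω k) ^ 2)) *
        ((1 / ω k) * Real.cos (ω k * τ + φ) - Real.sin (ω k * τ + φ)
          + Real.exp τ * (ω k * Real.cos φ + Real.sin φ)
          - (1 + (ω k) ^ 2) * Real.cos φ / ω k) with hgdef
  set G1 : ℝ → ℝ := fun τ => f₁ * Real.exp τ -
      c * ∑ k ∈ K, (A k / (1 + (ω k) ^ 2)) *
        (-Real.sin (ω k * τ + φ) - ω k * Real.cos (ω k * τ + φ)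
          + Real.exp τ * (ω k * Real.cos φ + Real.sin φ)) with hG1def
  -- g has derivative G1
  have hgd : ∀ τ, HasDerivAt g (G1 τ) τ := by
    intro τ
    have hsum := HasDerivAt.fun_sum (fun k hk => sol_deriv1 (hω k hk) (A k / (1 + (ω k) ^ 2)) φ τ)
    have h := ((hasDerivAt_const τ f₀).add
      (((Real.hasDerivAt_exp τ).sub_const 1).const_mul f₁)).sub (hsum.const_mul c)
    simp [hgdef, hG1def] at h ⊢
    exact h
  -- G1 has derivative G1 - c * Σ A sin
  have hG1d : ∀ τ, HasDerivAt G1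
      (G1 τ - c * ∑ k ∈ K, A k * Real.sin (ω k * τ + φ)) τ := by
    intro τ
    have hsum := HasDerivAt.fun_sum (u := K)
      (fun (k : ℤ) (_ : k ∈ K) => sol_deriv2 (ω k) (A k / (1 + (ω k) ^ 2)) φ τ)
    have h := ((Real.hasDerivAt_exp τ).const_mul f₁).sub (hsum.const_mul c)
    refine h.congr_deriv ?_
    have hsplit : ∑ k ∈ K, ((A k / (1 + (ω k) ^ 2)) *
          (-Real.sin (ω k * τ + φ) - ω k * Real.cos (ω k * τ + φ)
            + Real.exp τ * (ω k * Real.cos φ + Real.sin φ))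
          + (A k / (1 + (ω k) ^ 2)) * (1 + (ω k) ^ 2) * Real.sin (ω k * τ + φ))
        = (∑ k ∈ K, (A k / (1 + (ω k) ^ 2)) *
          (-Real.sin (ω k * τ + φ) - ω k * Real.cos (ω k * τ + φ)
            + Real.exp τ * (ω k * Real.cos φ + Real.sin φ)))
          + ∑ k ∈ K, A k * Real.sin (ω k * τ + φ) := by
      rw [← Finset.sum_add_distrib]
      refine Finset.sum_congr rfl fun k _ => ?_
      have h1 : (1 : ℝ) + (ω k) ^ 2 ≠ 0 := by positivity
      field_simp
    rw [hsplit, hG1def]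
    ring
  -- initial values of g and G1
  have hg0 : g 0 = f₀ := by
    have hsum : ∑ k ∈ K, (A k / (1 + (ω k) ^ 2)) *
        ((1 / ω k) * Real.cos (ω k * 0 + φ) - Real.sin (ω k * 0 + φ)
          + Real.exp 0 * (ω k * Real.cos φ + Real.sin φ)
          - (1 + (ω k) ^ 2) * Real.cos φ / ω k) = 0 := by
      refine Finset.sum_eq_zero fun k hk => ?_
      have hwk := hω k hk
      have : (1 / ω k) * Real.cos (ω k * 0 + φ) - Real.sin (ω k * 0 + φ)
          + Real.exp 0 * (ω k * Real.cos φ + Real.sin φ)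
          - (1 + (ω k) ^ 2) * Real.cos φ / ω k = 0 := by
        simp only [mul_zero, zero_add, Real.exp_zero]
        field_simp
        ring
      rw [this, mul_zero]
    show f₀ + f₁ * (Real.exp 0 - 1) - c * ∑ k ∈ K, (A k / (1 + (ω k) ^ 2)) *
        ((1 / ω k) * Real.cos (ω k * 0 + φ) - Real.sin (ω k * 0 + φ)
          + Real.exp 0 * (ω k * Real.cos φ + Real.sin φ)
          - (1 + (ω k) ^ 2) * Real.cos φ / ω k) = f₀
    rw [hsum]
    simp
  have hG10 : G1 0 = f₁ := by
    have hsum : ∑ k ∈ K, (A k / (1 + (ω k) ^ 2)) *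
        (-Real.sin (ω k * 0 + φ) - ω k * Real.cos (ω k * 0 + φ)
          + Real.exp 0 * (ω k * Real.cos φ + Real.sin φ)) = 0 := by
      refine Finset.sum_eq_zero fun k _ => ?_
      have : -Real.sin (ω k * 0 + φ) - ω k * Real.cos (ω k * 0 + φ)
          + Real.exp 0 * (ω k * Real.cos φ + Real.sin φ) = 0 := by
        simp only [mul_zero, zero_add, Real.exp_zero]
        ring
      rw [this, mul_zero]
    show f₁ * Real.exp 0 - c * ∑ k ∈ K, (A k / (1 + (ω k) ^ 2)) *
        (-Real.sin (ω k * 0 + φ) - ω k * Real.cos (ω k * 0 + φ)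
          + Real.exp 0 * (ω k * Real.cos φ + Real.sin φ)) = f₁
    rw [hsum]
    simp
  constructor
  · rintro ⟨hd1, hd2, hode, h0, h1⟩
    intro τ
    show f τ = g τ
    -- y = deriv f - G1 satisfies y' = y, y 0 = 0
    set y : ℝ → ℝ := fun τ => deriv f τ - G1 τ with hydef
    have hyd : ∀ τ, HasDerivAt y (y τ) τ := by
      intro τ
      have h := ((hd2 τ).hasDerivAt).sub (hG1d τ)
      refine h.congr_deriv ?_
      rw [hode τ, hydef]
      ring
    have hy0 : y 0 = 0 := by rw [hydef]; simp [h1, hG10]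
    -- z = y * exp(-τ) has zero derivative
    set z : ℝ → ℝ := fun τ => y τ * Real.exp (-τ) with hzdef
    have hzd : ∀ τ, HasDerivAt z 0 τ := by
      intro τ
      have he : HasDerivAt (fun τ : ℝ => Real.exp (-τ)) (-Real.exp (-τ)) τ := by
        have h' := (Real.hasDerivAt_exp (-τ)).comp τ (hasDerivAt_id τ).neg
        simp at h'
        exact h'
      have h := (hyd τ).mul he
      refine h.congr_deriv ?_
      ring
    have hzconst : ∀ τ, z τ = 0 := by
      intro τ
      have := is_const_of_deriv_eq_zero (fun τ => (hzd τ).differentiableAt)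
        (fun τ => (hzd τ).deriv) τ 0
      rw [this, hzdef]
      simp [hy0]
    have hy : ∀ τ, y τ = 0 := by
      intro τ
      have := hzconst τ
      rw [hzdef] at this
      have hexp : Real.exp (-τ) ≠ 0 := Real.exp_ne_zero _
      exact (mul_eq_zero.mp this).resolve_right hexp
    -- d = f - g has derivative y = 0, so d is constant 0
    set d : ℝ → ℝ := fun τ => f τ - g τ with hddef
    have hdd : ∀ τ, HasDerivAt d 0 τ := by
      intro τ
      have h := ((hd1 τ).hasDerivAt).sub (hgd τ)
      rw [show deriv f τ - G1 τ = y τ from rfl, hy τ] at h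
      exact h
    have hdconst := is_const_of_deriv_eq_zero (fun τ => (hdd τ).differentiableAt)
      (fun τ => (hdd τ).deriv) τ 0
    have hd0 : d 0 = 0 := by rw [hddef]; simp [h0, hg0]
    have hdz : f τ - g τ = 0 := by
      have := hdconst.trans hd0
      simpa [hddef] using this
    linarith
  · intro h
    have hfg : f = g := funext h
    subst hfg
    have hderivg : deriv g = G1 := funext fun τ => (hgd τ).deriv
    refine ⟨fun τ => (hgd τ).differentiableAt, ?_, ?_, hg0, by rw [hderivg]; exact hG10⟩
    · intro τ
      rw [hderivg]
      exact (hG1d τ).differentiableAt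
    · intro τ
      rw [hderivg, (hG1d τ).deriv]
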